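/- Let μ be a finite signed Borel measure on [0,1/4] with μ({1/4}) = 0 and ∫_{[0,1/4)} (1−4r)^{−1/2} d|μ|(r) ≤ 1. Then there exists a probability measure Π on [0,1] whose signed voting signature equals μ. -/

import Mathlib

open MeasureTheory
open scoped ENNReal NNReal

/-- Odd-budget majority accuracy: `P n q = ℙ(Bin(2n+1,q) ≥ n+1)`. -/
noncomputable def majP (n : ℕ) (q : ℝ) : ℝ :=
  ∑ j ∈ Finset.Icc (n+1) (2*n+1), ((2*n+1).choose j : ℝ) * q^j * (1-q)^(2*n+1-j)

/-- Population voting curve. -/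
noncomputable def voteV (μ : Measure ℝ) (n : ℕ) : ℝ := ∫ q, majP n q ∂μ

lemma aux_fin (μ : Measure ℝ) [IsFiniteMeasure μ] (g : ℝ → ℝ) (hg : ∀ q ∈ Set.Icc (0:ℝ) 1, g q ≤ 1) :
    IsFiniteMeasure ((μ.restrict (Set.Icc 0 1)).withDensity (fun q => ENNReal.ofReal (g q))) := by
  apply isFiniteMeasure_withDensity
  have h : ∫⁻ q, ENNReal.ofReal (g q) ∂(μ.restrict (Set.Icc 0 1)) ≤ ∫⁻ _, 1 ∂(μ.restrict (Set.Icc 0 1)) := by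
    refine setLIntegral_mono' measurableSet_Icc fun q hq => ?_
    simpa using ENNReal.ofReal_le_one.2 (hg q hq)
  refine ne_of_lt (lt_of_le_of_lt h ?_)
  simp [lintegral_one]

/-- Signed voting signature as a signed measure on ℝ (carried on [0,1/4]). -/
noncomputable def signature (μ : Measure ℝ) [IsFiniteMeasure μ] : SignedMeasure ℝ :=
  letI h1 := aux_fin μ (fun q => 2*q-1) (by intro q hq; simp only [Set.mem_Icc] at hq; linarith [hq.2])
  letI h2 := aux_fin μ (fun q => 1-2*q) (by intro q hq; simp only [Set.mem_Icc] at hq; linarith [hq.1])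
  (((μ.restrict (Set.Icc 0 1)).withDensity (fun q => ENNReal.ofReal (2*q-1))).map
      (fun q => q*(1-q))).toSignedMeasure
  - (((μ.restrict (Set.Icc 0 1)).withDensity (fun q => ENNReal.ofReal (1-2*q))).map
      (fun q => q*(1-q))).toSignedMeasure

/-- Integral of a real function against a signed measure, via the Jordan decomposition. -/
noncomputable def sInt {α : Type*} [MeasurableSpace α] (s : SignedMeasure α) (f : α → ℝ) : ℝ :=
  (∫ a, f a ∂s.toJordanDecomposition.posPart) - ∫ a, f a ∂s.toJordanDecomposition.negPart

/-- Limiting majority accuracy. -/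
noncomputable def voteVinf (μ : Measure ℝ) : ℝ :=
  (μ (Set.Ioc (1/2 : ℝ) 1)).toReal + (1/2) * (μ {(1/2 : ℝ)}).toReal

/-- Total-variation norm of the signed voting signature. -/
noncomputable def sigTV (μ : Measure ℝ) [IsFiniteMeasure μ] : ℝ :=
  ((signature μ).totalVariation Set.univ).toReal

section auxSec
lemma map_withDensity' {f : ℝ → ℝ} (hf : Measurable f) {g : ℝ → ℝ≥0∞} (hg : Measurable g)
    (μ : Measure ℝ) : (μ.map f).withDensity g = (μ.withDensity (fun x => g (f x))).map f := by
  ext s hs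
  rw [withDensity_apply _ hs, Measure.map_apply hf hs, setLIntegral_map hs hg hf,
    withDensity_apply _ (hf hs)]

lemma posneg_null (ν : SignedMeasure ℝ) {A : Set ℝ} (hA : MeasurableSet A)
    (h : ∀ B : Set ℝ, MeasurableSet B → B ⊆ A → ν B = 0) :
    ν.toJordanDecomposition.posPart A = 0 ∧ ν.toJordanDecomposition.negPart A = 0 := by
  obtain ⟨i, hi₁, hi₂, hi₃, hp, hn⟩ := ν.toJordanDecomposition_spec
  constructor
  · rw [hp, SignedMeasure.toMeasureOfZeroLE_apply _ hi₂ hi₁ hA]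
    have := h (i ∩ A) (hi₁.inter hA) Set.inter_subset_right
    simp [this]
  · rw [hn, SignedMeasure.toMeasureOfLEZero_apply _ hi₃ hi₁.compl hA]
    have := h (iᶜ ∩ A) (hi₁.compl.inter hA) Set.inter_subset_right
    simp [this]

noncomputable def qp (r : ℝ) : ℝ := (1 + Real.sqrt (1 - 4*r)) / 2
noncomputable def qm (r : ℝ) : ℝ := (1 - Real.sqrt (1 - 4*r)) / 2
noncomputable def wdens (r : ℝ) : ℝ≥0∞ := ENNReal.ofReal (Real.sqrt (1 - 4*r))⁻¹

lemma meas_qp : Measurable qp := by unfold qp; fun_prop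
lemma meas_qm : Measurable qm := by unfold qm; fun_prop
lemma meas_w : Measurable wdens := by unfold wdens; fun_prop

lemma qp_mem {r : ℝ} (hr : r ∈ Set.Ico (0:ℝ) (1/4)) : qp r ∈ Set.Icc (0:ℝ) 1 := by
  obtain ⟨h0, h1⟩ := hr
  have hs0 : 0 ≤ Real.sqrt (1 - 4*r) := Real.sqrt_nonneg _
  have hs1 : Real.sqrt (1 - 4*r) ≤ 1 := by
    have : Real.sqrt (1-4*r) ≤ Real.sqrt 1 := Real.sqrt_le_sqrt (by linarith)
    simpa using this
  constructor <;> (simp only [qp]; linarith)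

lemma qm_mem {r : ℝ} (hr : r ∈ Set.Ico (0:ℝ) (1/4)) : qm r ∈ Set.Icc (0:ℝ) 1 := by
  obtain ⟨h0, h1⟩ := hr
  have hs0 : 0 ≤ Real.sqrt (1 - 4*r) := Real.sqrt_nonneg _
  have hs1 : Real.sqrt (1 - 4*r) ≤ 1 := by
    have : Real.sqrt (1-4*r) ≤ Real.sqrt 1 := Real.sqrt_le_sqrt (by linarith)
    simpa using this
  constructor <;> (simp only [qm]; linarith)

lemma sq_sqrt' {r : ℝ} (hr : r ∈ Set.Ico (0:ℝ) (1/4)) :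
    Real.sqrt (1 - 4*r) * Real.sqrt (1 - 4*r) = 1 - 4*r :=
  Real.mul_self_sqrt (by obtain ⟨h0,h1⟩ := hr; linarith)

lemma sqrt_pos' {r : ℝ} (hr : r ∈ Set.Ico (0:ℝ) (1/4)) : 0 < Real.sqrt (1 - 4*r) :=
  Real.sqrt_pos.2 (by obtain ⟨h0,h1⟩ := hr; linarith)

lemma qp_prod {r : ℝ} (hr : r ∈ Set.Ico (0:ℝ) (1/4)) : qp r * (1 - qp r) = r := by
  have := sq_sqrt' hr; simp only [qp]; nlinarith [this]

lemma qm_prod {r : ℝ} (hr : r ∈ Set.Ico (0:ℝ) (1/4)) : qm r * (1 - qm r) = r := by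
  have := sq_sqrt' hr; simp only [qm]; nlinarith [this]

lemma two_qp {r : ℝ} : 2 * qp r - 1 = Real.sqrt (1 - 4*r) := by simp only [qp]; ring

lemma two_qm {r : ℝ} : 1 - 2 * qm r = Real.sqrt (1 - 4*r) := by simp only [qm]; ring

end auxSec

/-- Realizability: any finite signed Borel measure carried on `[0,1/4]` with no atom at
`1/4` and singular-kernel variation integral at most one is the signed voting signature
of some probability law on `[0,1]`. -/
theorem stmt7 (ν : SignedMeasure ℝ)
    (hcar : ∀ B : Set ℝ, MeasurableSet B → B ⊆ (Set.Icc (0:ℝ) (1/4))ᶜ → ν B = 0)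
    (hatom : ν {(1/4 : ℝ)} = 0)
    (hint : ∫⁻ r in Set.Ico (0:ℝ) (1/4), ENNReal.ofReal (Real.sqrt (1 - 4*r))⁻¹
        ∂ν.totalVariation ≤ 1) :
    ∃ (μ : Measure ℝ) (_ : IsFiniteMeasure μ), IsProbabilityMeasure μ ∧
      μ (Set.Icc (0:ℝ) 1)ᶜ = 0 ∧ signature μ = ν := by
  classical
  set P := ν.toJordanDecomposition.posPart with hPdef
  set N := ν.toJordanDecomposition.negPart with hNdef
  set K : Set ℝ := Set.Ico (0:ℝ) (1/4) with hKdef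
  have hKm : MeasurableSet K := measurableSet_Ico
  -- ν vanishes on measurable subsets of Kᶜ
  have hvan : ∀ B : Set ℝ, MeasurableSet B → B ⊆ Kᶜ → ν B = 0 := by
    intro B hB hBsub
    have hB1 : B = (B ∩ (Set.Icc (0:ℝ) (1/4))ᶜ) ∪ (B ∩ {(1/4:ℝ)}) := by
      ext x
      simp only [Set.mem_union, Set.mem_inter_iff, Set.mem_compl_iff, Set.mem_singleton_iff]
      constructor
      · intro hx
        have hxc := hBsub hx
        simp only [hKdef, Set.mem_compl_iff, Set.mem_Ico, not_and, not_lt] at hxc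
        by_cases hxI : x ∈ Set.Icc (0:ℝ) (1/4)
        · exact Or.inr ⟨hx, le_antisymm hxI.2 (hxc hxI.1)⟩
        · exact Or.inl ⟨hx, hxI⟩
      · rintro (⟨h,_⟩|⟨h,_⟩) <;> exact h
    have hd : Disjoint (B ∩ (Set.Icc (0:ℝ) (1/4))ᶜ) (B ∩ {(1/4:ℝ)}) := by
      refine Set.disjoint_left.2 ?_
      rintro x ⟨_, hx1⟩ ⟨_, hx2⟩
      rw [Set.mem_singleton_iff] at hx2
      exact hx1 (by rw [hx2]; norm_num)
    rw [hB1, VectorMeasure.of_union hd (hB.inter measurableSet_Icc.compl)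
      (hB.inter (measurableSet_singleton _))]
    have h1 : ν (B ∩ (Set.Icc (0:ℝ) (1/4))ᶜ) = 0 :=
      hcar _ (hB.inter measurableSet_Icc.compl) Set.inter_subset_right
    have h2 : ν (B ∩ {(1/4:ℝ)}) = 0 := by
      rcases Set.subset_singleton_iff_eq.1 (Set.inter_subset_right (s := B)) with h | h
      · rw [h]; exact ν.empty
      · rw [h]; exact hatom
    rw [h1, h2, add_zero]
  obtain ⟨hPK, hNK⟩ := posneg_null ν hKm.compl hvan
  have hPae : ∀ᵐ r ∂P, r ∈ K := by
    rw [ae_iff]; simpa [Set.compl_def] using hPK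
  have hNae : ∀ᵐ r ∂N, r ∈ K := by
    rw [ae_iff]; simpa [Set.compl_def] using hNK
  set A := P.withDensity wdens with hAdef
  set Bm := N.withDensity wdens with hBmdef
  have hAK : A Kᶜ = 0 := by
    rw [hAdef, withDensity_apply _ hKm.compl]
    exact setLIntegral_measure_zero _ _ hPK
  have hBK : Bm Kᶜ = 0 := by
    rw [hBmdef, withDensity_apply _ hKm.compl]
    exact setLIntegral_measure_zero _ _ hNK
  have hBae : ∀ᵐ r ∂Bm, r ∈ K := by
    rw [ae_iff]; simpa [Set.compl_def] using hBK
  have hPr : P.restrict K = P := Measure.restrict_eq_self_of_ae_mem hPae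
  have hNr : N.restrict K = N := Measure.restrict_eq_self_of_ae_mem hNae
  set t : ℝ≥0∞ := A Set.univ + Bm Set.univ with htdef
  have ht : t ≤ 1 := by
    have h1 : A Set.univ = ∫⁻ r in K, wdens r ∂P := by
      rw [hAdef, withDensity_apply _ MeasurableSet.univ, Measure.restrict_univ]
      conv_lhs => rw [← hPr]
    have h2 : Bm Set.univ = ∫⁻ r in K, wdens r ∂N := by
      rw [hBmdef, withDensity_apply _ MeasurableSet.univ, Measure.restrict_univ]
      conv_lhs => rw [← hNr]
    have h3 : (∫⁻ r in K, wdens r ∂ν.totalVariation)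
        = (∫⁻ r in K, wdens r ∂P) + ∫⁻ r in K, wdens r ∂N := by
      have htv : ν.totalVariation = P + N := rfl
      rw [htv, Measure.restrict_add, lintegral_add_measure]
    rw [htdef, h1, h2, ← h3]
    simpa only [wdens] using hint
  set μ : Measure ℝ := A.map qp + Bm.map qm + (1 - t) • Measure.dirac (1/2 : ℝ) with hμdef
  have hAuniv : (A.map qp) Set.univ = A Set.univ := by
    rw [Measure.map_apply meas_qp MeasurableSet.univ, Set.preimage_univ]
  have hBuniv : (Bm.map qm) Set.univ = Bm Set.univ := by
    rw [Measure.map_apply meas_qm MeasurableSet.univ, Set.preimage_univ]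
  have hprob : IsProbabilityMeasure μ := by
    constructor
    rw [hμdef, Measure.add_apply, Measure.add_apply, hAuniv, hBuniv, Measure.smul_apply,
      Measure.dirac_apply]
    simp only [Set.indicator_univ, Pi.one_apply, smul_eq_mul, mul_one]
    rw [← htdef]
    exact add_tsub_cancel_of_le ht
  have hcompl : μ (Set.Icc (0:ℝ) 1)ᶜ = 0 := by
    rw [hμdef, Measure.add_apply, Measure.add_apply]
    have h1 : (A.map qp) (Set.Icc (0:ℝ) 1)ᶜ = 0 := by
      rw [Measure.map_apply meas_qp measurableSet_Icc.compl]
      refine measure_mono_null ?_ hAK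
      intro r hr
      simp only [Set.mem_preimage, Set.mem_compl_iff] at hr ⊢
      exact fun hrK => hr (qp_mem hrK)
    have h2 : (Bm.map qm) (Set.Icc (0:ℝ) 1)ᶜ = 0 := by
      rw [Measure.map_apply meas_qm measurableSet_Icc.compl]
      refine measure_mono_null ?_ hBK
      intro r hr
      simp only [Set.mem_preimage, Set.mem_compl_iff] at hr ⊢
      exact fun hrK => hr (qm_mem hrK)
    have h3 : ((1 - t) • Measure.dirac (1/2 : ℝ)) (Set.Icc (0:ℝ) 1)ᶜ = 0 := by
      rw [Measure.smul_apply, Measure.dirac_apply]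
      have : (1/2 : ℝ) ∈ Set.Icc (0:ℝ) 1 := by constructor <;> norm_num
      rw [Set.indicator_of_notMem (by simpa using this)]
      simp
    rw [h1, h2, h3]
    simp
  have hres : μ.restrict (Set.Icc (0:ℝ) 1) = μ :=
    Measure.restrict_eq_self_of_ae_mem (by rw [ae_iff]; simpa [Set.compl_def] using hcompl)
  have hm : Measurable (fun q : ℝ => q * (1-q)) := by fun_prop
  have hg₁ : Measurable (fun q : ℝ => ENNReal.ofReal (2*q-1)) := by fun_prop
  have hg₂ : Measurable (fun q : ℝ => ENNReal.ofReal (1-2*q)) := by fun_prop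
  have hM1 : ((μ.restrict (Set.Icc 0 1)).withDensity (fun q => ENNReal.ofReal (2*q-1))).map
      (fun q => q*(1-q)) = P := by
    rw [hres, hμdef, withDensity_add_measure, withDensity_add_measure]
    have hdir : ((1 - t) • Measure.dirac (1/2 : ℝ)).withDensity
        (fun q => ENNReal.ofReal (2*q-1)) = 0 := by
      rw [withDensity_smul_measure]
      have hz : (Measure.dirac (1/2 : ℝ)).withDensity (fun q => ENNReal.ofReal (2*q-1)) = 0 := by
        ext s hs
        rw [withDensity_apply _ hs, setLIntegral_dirac]
        split_ifs <;> norm_num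
      rw [hz, smul_zero]
    have h2 : (Bm.map qm).withDensity (fun q => ENNReal.ofReal (2*q-1)) = 0 := by
      rw [map_withDensity' meas_qm hg₁]
      have he : (fun x => ENNReal.ofReal (2 * qm x - 1)) =ᵐ[Bm] 0 := by
        filter_upwards [hBae] with r hr
        simp only [Pi.zero_apply]
        rw [ENNReal.ofReal_eq_zero]
        have h0 := Real.sqrt_nonneg (1-4*r)
        linarith [two_qm (r := r)]
      rw [withDensity_congr_ae he, withDensity_zero, Measure.map_zero]
    have h1 : (A.map qp).withDensity (fun q => ENNReal.ofReal (2*q-1)) = P.map qp := by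
      rw [map_withDensity' meas_qp hg₁, hAdef,
        ← withDensity_mul _ meas_w (by exact (measurable_const.mul meas_qp).sub measurable_const |>.ennreal_ofReal : Measurable (fun x => ENNReal.ofReal (2 * qp x - 1)))]
      have he : (wdens * fun x => ENNReal.ofReal (2 * qp x - 1)) =ᵐ[P] (1 : ℝ → ℝ≥0∞) := by
        filter_upwards [hPae] with r hr
        simp only [Pi.mul_apply, Pi.one_apply, wdens]
        rw [two_qp, ← ENNReal.ofReal_mul (by positivity),
          inv_mul_cancel₀ (ne_of_gt (sqrt_pos' hr))]
        exact ENNReal.ofReal_one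
      rw [withDensity_congr_ae he, withDensity_one]
    rw [h1, h2, hdir, add_zero, add_zero, Measure.map_map hm meas_qp]
    have hcg : (fun q : ℝ => q*(1-q)) ∘ qp =ᵐ[P] id := by
      filter_upwards [hPae] with r hr
      simp only [Function.comp_apply, id_eq]
      exact qp_prod hr
    rw [Measure.map_congr hcg, Measure.map_id]
  have hM2 : ((μ.restrict (Set.Icc 0 1)).withDensity (fun q => ENNReal.ofReal (1-2*q))).map
      (fun q => q*(1-q)) = N := by
    rw [hres, hμdef, withDensity_add_measure, withDensity_add_measure]
    have hdir : ((1 - t) • Measure.dirac (1/2 : ℝ)).withDensity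
        (fun q => ENNReal.ofReal (1-2*q)) = 0 := by
      rw [withDensity_smul_measure]
      have hz : (Measure.dirac (1/2 : ℝ)).withDensity (fun q => ENNReal.ofReal (1-2*q)) = 0 := by
        ext s hs
        rw [withDensity_apply _ hs, setLIntegral_dirac]
        split_ifs <;> norm_num
      rw [hz, smul_zero]
    have h1 : (A.map qp).withDensity (fun q => ENNReal.ofReal (1-2*q)) = 0 := by
      rw [map_withDensity' meas_qp hg₂]
      have he : (fun x => ENNReal.ofReal (1 - 2 * qp x)) =ᵐ[A] 0 := by
        filter_upwards [ae_iff.2 (by simpa [Set.compl_def] using hAK : A {r : ℝ | ¬ r ∈ K} = 0)] with r hr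
        simp only [Pi.zero_apply]
        rw [ENNReal.ofReal_eq_zero]
        have h0 := Real.sqrt_nonneg (1-4*r)
        linarith [two_qp (r := r)]
      rw [withDensity_congr_ae he, withDensity_zero, Measure.map_zero]
    have h2 : (Bm.map qm).withDensity (fun q => ENNReal.ofReal (1-2*q)) = N.map qm := by
      rw [map_withDensity' meas_qm hg₂, hBmdef,
        ← withDensity_mul _ meas_w (by exact (measurable_const.sub (measurable_const.mul meas_qm)).ennreal_ofReal : Measurable (fun x => ENNReal.ofReal (1 - 2 * qm x)))]
      have he : (wdens * fun x => ENNReal.ofReal (1 - 2 * qm x)) =ᵐ[N] (1 : ℝ → ℝ≥0∞) := by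
        filter_upwards [hNae] with r hr
        simp only [Pi.mul_apply, Pi.one_apply, wdens]
        rw [two_qm, ← ENNReal.ofReal_mul (by positivity),
          inv_mul_cancel₀ (ne_of_gt (sqrt_pos' hr))]
        exact ENNReal.ofReal_one
      rw [withDensity_congr_ae he, withDensity_one]
    rw [h1, h2, hdir, zero_add, add_zero, Measure.map_map hm meas_qm]
    have hcg : (fun q : ℝ => q*(1-q)) ∘ qm =ᵐ[N] id := by
      filter_upwards [hNae] with r hr
      simp only [Function.comp_apply, id_eq]
      exact qm_prod hr
    rw [Measure.map_congr hcg, Measure.map_id]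
  haveI := hprob
  refine ⟨μ, inferInstance, hprob, hcompl, ?_⟩
  haveI if1 : IsFiniteMeasure (((μ.restrict (Set.Icc 0 1)).withDensity
      (fun q => ENNReal.ofReal (2*q-1))).map (fun q => q*(1-q))) := by
    rw [hM1]; infer_instance
  haveI if2 : IsFiniteMeasure (((μ.restrict (Set.Icc 0 1)).withDensity
      (fun q => ENNReal.ofReal (1-2*q))).map (fun q => q*(1-q))) := by
    rw [hM2]; infer_instance
  ext i hi
  simp only [signature]
  rw [VectorMeasure.sub_apply, Measure.toSignedMeasure_apply_measurable hi,
    Measure.toSignedMeasure_apply_measurable hi, hM1, hM2]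
  conv_rhs => rw [← ν.toSignedMeasure_toJordanDecomposition]
  simp only [JordanDecomposition.toSignedMeasure]
  rw [VectorMeasure.sub_apply, Measure.toSignedMeasure_apply_measurable hi,
    Measure.toSignedMeasure_apply_measurable hi, hPdef, hNdef]
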